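/- arXiv:2209.13110 — 3 statements merged into one kernel-verified Lean document; each statement's English description precedes it below -/
import Mathlib

section
/- Let f ∈ k[x,y,z] be homogeneous of degree d ≥ 2 with char k = 0. Set Δ_zz = f_xx f_yy − f_xy², Δ_ac = cofactors of the Hessian as usual. Then (d-1)²·f_x·f_y = z²·Δ_xy + xy·Δ_zz − xz·Δ_yz − yz·Δ_xz + d(d-1)·f_xy·f, where Δ_xy = f_xz f_yz − f_xy f_zz, Δ_yz = f_xy f_xz − f_xx f_yz, Δ_xz = f_xy f_yz − f_xz f_yy. -/
open MvPolynomial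

noncomputable def dX {k : Type*} [CommSemiring k] (f : MvPolynomial (Fin 3) k) :
    MvPolynomial (Fin 3) k := pderiv 0 f
noncomputable def dY {k : Type*} [CommSemiring k] (f : MvPolynomial (Fin 3) k) :
    MvPolynomial (Fin 3) k := pderiv 1 f
noncomputable def dZ {k : Type*} [CommSemiring k] (f : MvPolynomial (Fin 3) k) :
    MvPolynomial (Fin 3) k := pderiv 2 f

lemma pderiv_comm' {σ R : Type*} [DecidableEq σ] [CommSemiring R] (i j : σ)
    (f : MvPolynomial σ R) : pderiv i (pderiv j f) = pderiv j (pderiv i f) := by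
  induction f using MvPolynomial.induction_on' with
  | add p q hp hq => simp [hp, hq]
  | monomial s a =>
    rcases eq_or_ne i j with rfl | hij
    · rfl
    · simp only [pderiv_monomial, Finsupp.tsub_apply, Finsupp.single_apply, hij, hij.symm,
        if_false, Nat.sub_zero, tsub_tsub]
      rw [add_comm (Finsupp.single j 1)]
      ring_nf

lemma degree_three {s : Fin 3 →₀ ℕ} : s.degree = s 0 + s 1 + s 2 := by
  rw [Finsupp.degree_apply, Finset.sum_subset (Finset.subset_univ _)
    (fun i _ hi => Finsupp.notMem_support_iff.mp hi), Fin.sum_univ_three]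

lemma pderiv_isHom {k : Type*} [CommRing k] {n : ℕ} (i : Fin 3) {f : MvPolynomial (Fin 3) k}
    (hf : f.IsHomogeneous n) : (pderiv i f).IsHomogeneous (n - 1) := by
  rw [f.as_sum, map_sum]
  apply IsHomogeneous.sum
  intro s hs
  have hdeg : s.degree = n := by
    have := hf (mem_support_iff.mp hs)
    rwa [Pi.one_def, ← Finsupp.degree_eq_weight_one] at this
  rw [pderiv_monomial]
  rcases Nat.eq_zero_or_pos (s i) with h | h
  · simp only [h, Nat.cast_zero, mul_zero, monomial_zero]
    exact isHomogeneous_zero _ _ _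
  · apply isHomogeneous_monomial
    rw [degree_three] at hdeg ⊢
    simp only [Finsupp.tsub_apply, Finsupp.single_apply]
    fin_cases i <;> simp_all <;> omega

lemma euler3 {k : Type*} [CommRing k] {n : ℕ} {f : MvPolynomial (Fin 3) k}
    (hf : f.IsHomogeneous n) :
    X 0 * pderiv 0 f + X 1 * pderiv 1 f + X 2 * pderiv 2 f = C (n : k) * f := by
  conv_lhs => rw [f.as_sum]
  rw [map_sum, map_sum, map_sum, Finset.mul_sum, Finset.mul_sum, Finset.mul_sum,
    ← Finset.sum_add_distrib, ← Finset.sum_add_distrib]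
  conv_rhs => rw [f.as_sum, Finset.mul_sum]
  refine Finset.sum_congr rfl fun s hs => ?_
  have hdeg : s.degree = n := by
    have := hf (mem_support_iff.mp hs)
    rwa [Pi.one_def, ← Finsupp.degree_eq_weight_one] at this
  have key : ∀ i : Fin 3, X i * pderiv i (monomial s (coeff s f))
      = monomial s (coeff s f * (s i : k)) := by
    intro i
    rw [pderiv_monomial]
    rcases Nat.eq_zero_or_pos (s i) with h | h
    · simp [h]
    · rw [X, monomial_mul, one_mul, add_tsub_cancel_of_le]
      exact Finsupp.single_le_iff.mpr h
  rw [key 0, key 1, key 2, C_mul_monomial, ← map_add, ← map_add]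
  congr 1
  rw [← mul_add, ← mul_add, ← Nat.cast_add, ← Nat.cast_add, ← degree_three, hdeg, mul_comm]

theorem stmt6 {k : Type*} [Field k] [CharZero k] (d : ℕ) (hd : 2 ≤ d)
    (f : MvPolynomial (Fin 3) k) (hf : f.IsHomogeneous d) :
    C (((d : k) - 1) ^ 2) * dX f * dY f
      = X 2 ^ 2 * (dZ (dX f) * dZ (dY f) - dY (dX f) * dZ (dZ f))
        + X 0 * X 1 * (dX (dX f) * dY (dY f) - dY (dX f) ^ 2)
        - X 0 * X 2 * (dY (dX f) * dZ (dX f) - dX (dX f) * dZ (dY f))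
        - X 1 * X 2 * (dY (dX f) * dZ (dY f) - dZ (dX f) * dY (dY f))
        + C ((d : k) * ((d : k) - 1)) * dY (dX f) * f := by
  have hcast : ((d - 1 : ℕ) : k) = (d : k) - 1 := by
    rw [Nat.cast_sub (by omega)]; norm_num
  have h0 := euler3 hf
  have hx := euler3 (pderiv_isHom 0 hf)
  have hy := euler3 (pderiv_isHom 1 hf)
  have hz := euler3 (pderiv_isHom 2 hf)
  rw [hcast, pderiv_comm' 0 1] at hy
  rw [hcast, pderiv_comm' 0 2, pderiv_comm' 1 2] at hz
  rw [hcast] at hx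
  simp only [dX, dY, dZ]
  rw [map_pow, map_mul]
  have hxy := congrArg₂ (· * ·) hx hy
  linear_combination (-1 : MvPolynomial (Fin 3) k) * hxy
    + pderiv 1 (pderiv 0 f) * (X 0 * hx + X 1 * hy + X 2 * hz)
    + C ((d : k) - 1) * pderiv 1 (pderiv 0 f) * h0
end

section
/- Let f ∈ k[x,y,z] be homogeneous of degree d ≥ 2 with char k = 0. Then (d-1)²·f_x² = −y²·Δ_zz − z²·Δ_yy + 2yz·Δ_yz + d(d-1)·f_xx·f, where Δ_yy = f_xx f_zz − f_xz², Δ_zz = f_xx f_yy − f_xy², Δ_yz = f_xy f_xz − f_xx f_yz. -/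
open MvPolynomial

lemma X_mul_pderiv_monomial' {k : Type*} [CommSemiring k] {n : ℕ} (i : Fin n)
    (m : Fin n →₀ ℕ) (a : k) :
    X i * pderiv i (monomial m a) = monomial m ((m i : k) * a) := by
  rw [pderiv_monomial]
  rcases Nat.eq_zero_or_pos (m i) with h | h
  · simp [h]
  · have hle : Finsupp.single i 1 ≤ m := Finsupp.single_le_iff.mpr h
    calc X i * monomial (m - Finsupp.single i 1) (a * (m i : k))
        = X i ^ 1 * monomial (m - Finsupp.single i 1) (a * (m i : k)) := by rw [pow_one]
      _ = monomial (Finsupp.single i 1 + (m - Finsupp.single i 1)) (a * (m i : k)) :=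
          (monomial_single_add).symm
      _ = monomial m ((m i : k) * a) := by
          rw [add_tsub_cancel_of_le hle, mul_comm]

lemma degree_fin_sum {n : ℕ} (m : Fin n →₀ ℕ) : m.degree = ∑ x : Fin n, m x := by
  rw [Finsupp.degree_apply, Finset.sum_subset (Finset.subset_univ m.support)]
  intro x _ hx
  simpa using hx

lemma euler' {k : Type*} [CommSemiring k] {n d : ℕ} {f : MvPolynomial (Fin n) k}
    (hf : f.IsHomogeneous d) :
    ∑ i, X i * pderiv i f = C (d : k) * f := by
  conv_lhs => rw [f.as_sum]
  simp_rw [map_sum, Finset.mul_sum]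
  rw [Finset.sum_comm]
  conv_rhs => rw [f.as_sum, Finset.mul_sum]
  refine Finset.sum_congr rfl fun m hm => ?_
  simp only [X_mul_pderiv_monomial']
  have hdeg : ∑ x : Fin n, m x = d := by
    have h := hf (mem_support_iff.mp hm)
    rw [← h, Pi.one_def, ← Finsupp.degree_eq_weight_one, degree_fin_sum]
  rw [C_mul_monomial, ← hdeg, Nat.cast_sum, Finset.sum_mul, map_sum]

lemma pderiv_isHomogeneous' {k : Type*} [CommSemiring k] {n d : ℕ}
    {f : MvPolynomial (Fin n) k} (hf : f.IsHomogeneous d) (i : Fin n) :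
    (pderiv i f).IsHomogeneous (d - 1) := by
  rw [f.as_sum, map_sum]
  apply IsHomogeneous.sum
  intro m hm
  rw [pderiv_monomial]
  rcases Nat.eq_zero_or_pos (m i) with h | h
  · simp only [h, Nat.cast_zero, mul_zero, map_zero]
    exact isHomogeneous_zero _ _ _
  · apply isHomogeneous_monomial
    have hle : Finsupp.single i 1 ≤ m := Finsupp.single_le_iff.mpr h
    have hd : m.degree = d := by
      have h2 := hf (mem_support_iff.mp hm)
      rw [← h2, Pi.one_def, ← Finsupp.degree_eq_weight_one]
    have hadd : (m - Finsupp.single i 1) + Finsupp.single i 1 = m :=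
      tsub_add_cancel_of_le hle
    have : (m - Finsupp.single i 1).degree + 1 = d := by
      rw [← hd]
      conv_rhs => rw [← hadd]
      rw [degree_fin_sum, degree_fin_sum]
      simp only [Finsupp.add_apply]
      rw [Finset.sum_add_distrib]
      simp [Finsupp.single_apply]
    omega

lemma pderiv_pderiv_comm' {k : Type*} [CommSemiring k] {n : ℕ} (i j : Fin n)
    (f : MvPolynomial (Fin n) k) :
    pderiv i (pderiv j f) = pderiv j (pderiv i f) := by
  induction f using MvPolynomial.induction_on with
  | C a => simp
  | add p q hp hq => simp [hp, hq]
  | mul_X p s hp =>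
      simp only [pderiv_mul, map_add, pderiv_mul, hp]
      rw [pderiv_X, pderiv_X]
      rcases eq_or_ne s i with rfl | hi <;> rcases eq_or_ne s j with rfl | hj <;>
        simp_all [Pi.single_apply]


theorem stmt7 {k : Type*} [Field k] [CharZero k] (d : ℕ) (hd : 2 ≤ d)
    (f : MvPolynomial (Fin 3) k) (hf : f.IsHomogeneous d) :
    C (((d : k) - 1) ^ 2) * dX f ^ 2
      = - X 1 ^ 2 * (dX (dX f) * dY (dY f) - dY (dX f) ^ 2)
        - X 2 ^ 2 * (dX (dX f) * dZ (dZ f) - dZ (dX f) ^ 2)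
        + 2 * X 1 * X 2 * (dY (dX f) * dZ (dX f) - dX (dX f) * dZ (dY f))
        + C ((d : k) * ((d : k) - 1)) * dX (dX f) * f := by
  have hcast : ((d - 1 : ℕ) : k) = (d : k) - 1 := by
    have : 1 ≤ d := by omega
    push_cast [this]
    ring
  have E0 := euler' hf
  have E1 := euler' (pderiv_isHomogeneous' hf 0)
  have E2 := euler' (pderiv_isHomogeneous' hf 1)
  have E3 := euler' (pderiv_isHomogeneous' hf 2)
  rw [Fin.sum_univ_three] at E0 E1 E2 E3
  rw [hcast] at E1 E2 E3
  rw [pderiv_pderiv_comm' 0 1 f] at E2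
  rw [pderiv_pderiv_comm' 0 2 f, pderiv_pderiv_comm' 1 2 f] at E3
  simp only [dX, dY, dZ]
  rw [show C (((d : k) - 1) ^ 2) = (C ((d:k) - 1))^2 from map_pow _ _ 2,
    show C ((d : k) * ((d : k) - 1)) = C (d:k) * C ((d:k) - 1) from map_mul _ _ _,
    show (C ((d:k) - 1) : MvPolynomial (Fin 3) k) = C (d:k) - 1 by rw [map_sub, map_one]]
  rw [show (C ((d:k) - 1) : MvPolynomial (Fin 3) k) = C (d:k) - 1 by rw [map_sub, map_one]] at E1 E2 E3
  linear_combination (pderiv 0 (pderiv 0 f) * X 0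
      - (X 0 * pderiv 0 (pderiv 0 f) + X 1 * pderiv 1 (pderiv 0 f) + X 2 * pderiv 2 (pderiv 0 f)
        + (C (d:k) - 1) * pderiv 0 f)) * E1
    + pderiv 0 (pderiv 0 f) * X 1 * E2
    + pderiv 0 (pderiv 0 f) * X 2 * E3
    + pderiv 0 (pderiv 0 f) * (C (d:k) - 1) * E0
end

section
/- Let f ∈ k[x,y,z] be homogeneous of degree d, char k = 0, and H_yz = f_z∂_y − f_y∂_z. Then (d-1)·H_yz(f_y) = z·Δ_xx − x·Δ_xz and (d-1)·H_yz(f_z) = x·Δ_xy − y·Δ_xx, where Δ_xx = f_yy f_zz − f_yz², Δ_xy = f_xz f_yz − f_xy f_zz, Δ_xz = f_xy f_yz − f_xz f_yy. -/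
open MvPolynomial

lemma my_pderiv_comm {k : Type*} [CommSemiring k] (i j : Fin 3)
    (f : MvPolynomial (Fin 3) k) :
    pderiv i (pderiv j f) = pderiv j (pderiv i f) := by
  rcases eq_or_ne i j with rfl | hij
  · rfl
  induction f using MvPolynomial.induction_on' with
  | add p q hp hq => simp [map_add, hp, hq]
  | monomial s a =>
    rw [pderiv_monomial, pderiv_monomial, pderiv_monomial, pderiv_monomial]
    have h1 : (s - Finsupp.single j 1 : Fin 3 →₀ ℕ) i = s i := by
      rw [Finsupp.tsub_apply, Finsupp.single_apply]
      simp [hij.symm]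
    have h2 : (s - Finsupp.single i 1 : Fin 3 →₀ ℕ) j = s j := by
      rw [Finsupp.tsub_apply, Finsupp.single_apply]
      simp [hij]
    rw [h1, h2, tsub_tsub, tsub_tsub, add_comm (Finsupp.single j 1), mul_right_comm]

lemma my_euler_aux {k : Type*} [CommSemiring k] (i : Fin 3) (s : Fin 3 →₀ ℕ) (a : k) :
    X i * pderiv i (monomial s a) = monomial s (a * s i) := by
  rw [pderiv_monomial]
  rcases Nat.eq_zero_or_pos (s i) with h | h
  · simp [h]
  · rw [X, monomial_mul, one_mul]
    congr 1
    rw [add_comm, tsub_add_cancel_of_le (Finsupp.single_le_iff.mpr h)]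

lemma my_euler {k : Type*} [CommSemiring k] {n : ℕ} {f : MvPolynomial (Fin 3) k}
    (hf : f.IsHomogeneous n) :
    X 0 * pderiv 0 f + X 1 * pderiv 1 f + X 2 * pderiv 2 f = C (n : k) * f := by
  conv_lhs => rw [f.as_sum]
  conv_rhs => rw [f.as_sum]
  rw [map_sum (pderiv (0 : Fin 3)), map_sum (pderiv (1 : Fin 3)),
    map_sum (pderiv (2 : Fin 3)), Finset.mul_sum, Finset.mul_sum, Finset.mul_sum,
    Finset.mul_sum, ← Finset.sum_add_distrib, ← Finset.sum_add_distrib]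
  refine Finset.sum_congr rfl fun s hs => ?_
  rw [my_euler_aux, my_euler_aux, my_euler_aux, ← map_add, ← map_add, C_mul_monomial]
  congr 1
  have hdeg : s 0 + s 1 + s 2 = n := by
    have h1 : Finsupp.weight 1 s = n := hf (mem_support_iff.mp hs)
    rw [Pi.one_def, ← Finsupp.degree_eq_weight_one] at h1
    rw [Finsupp.degree_apply,
      Finset.sum_subset (Finset.subset_univ s.support)
        (fun x _ hx => Finsupp.notMem_support_iff.mp hx), Fin.sum_univ_three] at h1
    exact h1
  rw [← hdeg]
  push_cast
  ring

theorem stmt13 {k : Type*} [Field k] [CharZero k] (d : ℕ)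
    (f : MvPolynomial (Fin 3) k) (hf : f.IsHomogeneous d) :
    C ((d : k) - 1) * (dZ f * dY (dY f) - dY f * dZ (dY f))
        = X 2 * (dY (dY f) * dZ (dZ f) - dZ (dY f) ^ 2)
          - X 0 * (dY (dX f) * dZ (dY f) - dZ (dX f) * dY (dY f)) ∧
    C ((d : k) - 1) * (dZ f * dZ (dY f) - dY f * dZ (dZ f))
        = X 0 * (dZ (dX f) * dZ (dY f) - dY (dX f) * dZ (dZ f))
          - X 1 * (dY (dY f) * dZ (dZ f) - dZ (dY f) ^ 2) := by
  have E := my_euler hf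
  have Ey := congrArg (pderiv (1 : Fin 3)) E
  have Ez := congrArg (pderiv (2 : Fin 3)) E
  simp only [map_add, pderiv_mul, pderiv_X_self, pderiv_X_of_ne (by decide : (0 : Fin 3) ≠ 1),
    pderiv_X_of_ne (by decide : (2 : Fin 3) ≠ 1), pderiv_X_of_ne (by decide : (0 : Fin 3) ≠ 2),
    pderiv_X_of_ne (by decide : (1 : Fin 3) ≠ 2), pderiv_C, one_mul, zero_mul, zero_add,
    add_zero] at Ey Ez
  rw [my_pderiv_comm 1 2] at Ey
  have Ey' : X 0 * pderiv 1 (pderiv 0 f) + X 1 * pderiv 1 (pderiv 1 f)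
      + X 2 * pderiv 2 (pderiv 1 f) = C ((d : k) - 1) * pderiv 1 f := by
    rw [map_sub, C_1, sub_mul, one_mul, ← Ey]; ring
  have Ez' : X 0 * pderiv 2 (pderiv 0 f) + X 1 * pderiv 2 (pderiv 1 f)
      + X 2 * pderiv 2 (pderiv 2 f) = C ((d : k) - 1) * pderiv 2 f := by
    rw [map_sub, C_1, sub_mul, one_mul, ← Ez]; ring
  constructor
  · simp only [dX, dY, dZ]
    linear_combination (pderiv 2 (pderiv 1 f)) * Ey' - (pderiv 1 (pderiv 1 f)) * Ez'
  · simp only [dX, dY, dZ]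
    linear_combination (pderiv 2 (pderiv 2 f)) * Ey' - (pderiv 2 (pderiv 1 f)) * Ez'
end
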